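/- Let π be a root of the power series ∑_{j≥0} t^{p^j}/p^j with ord_p(π) = 1/(p−1), and for i ≥ 1 define γ_i := π^{−1} ∑_{j=0}^{i} π^{p^j}/p^j (and γ_0 := 1). Then γ_i = −π^{−1} ∑_{j=i+1}^{∞} π^{p^j}/p^j, and consequently ord_p(γ_i) = (p^{i+1}−1)/(p−1) − (i+1) for every i ≥ 0. -/

import Mathlib

/-- the two expressions for Dwork's `γ_i` agree and its valuation is
`(p^{i+1}-1)/(p-1) - (i+1)`.  Here `ord_p x = -log_p ‖x‖` in a nonarchimedean normed
field `K`, `π` is a zero of `∑_j t^{p^j}/p^j` with `ord_p π = 1/(p-1)`. -/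
theorem stmt0 {K : Type*} [NormedField K] [IsUltrametricDist K]
    (p : ℕ) (hp : p.Prime) (π : K) (hπ0 : π ≠ 0)
    (hzero : HasSum (fun j : ℕ => π ^ (p ^ j) / ((p : K) ^ j)) 0)
    (hordp : -Real.logb p ‖(p : K)‖ = 1)
    (hordπ : -Real.logb p ‖π‖ = 1 / ((p : ℝ) - 1))
    (γ : ℕ → K) (hγ0 : γ 0 = 1)
    (hγ : ∀ i : ℕ, 1 ≤ i →
      γ i = π⁻¹ * ∑ j ∈ Finset.range (i + 1), π ^ (p ^ j) / ((p : K) ^ j)) :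
    ∀ i : ℕ,
      HasSum (fun j : ℕ => π ^ (p ^ (i + 1 + j)) / ((p : K) ^ (i + 1 + j))) (-(π * γ i)) ∧
      -Real.logb p ‖γ i‖ = ((p : ℝ) ^ (i + 1) - 1) / ((p : ℝ) - 1) - (i + 1) := by
  set f : ℕ → K := fun j => π ^ (p ^ j) / ((p : K) ^ j) with hf
  have hp1 : (1 : ℝ) < (p : ℝ) := by exact_mod_cast hp.one_lt
  have hp1' : (p : ℝ) - 1 ≠ 0 := by linarith
  have hπpos : 0 < ‖π‖ := norm_pos_iff.mpr hπ0
  have hpKpos : 0 < ‖(p : K)‖ := by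
    rcases (norm_nonneg (p : K)).lt_or_eq with h | h
    · exact h
    · exfalso; rw [← h, Real.logb_zero, neg_zero] at hordp; exact one_ne_zero hordp.symm
  have hfpos : ∀ j : ℕ, 0 < ‖f j‖ := by
    intro j
    simp only [hf, norm_div, norm_pow]
    positivity
  -- the "ord" of f j
  set L : ℕ → ℝ := fun j => (p : ℝ) ^ j / ((p : ℝ) - 1) - j with hLdef
  have hL : ∀ j : ℕ, -Real.logb p ‖f j‖ = L j := by
    intro j
    have h1 : ‖f j‖ = ‖π‖ ^ (p ^ j) / ‖(p : K)‖ ^ j := by simp [hf, norm_div, norm_pow]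
    rw [h1, Real.logb_div (by positivity) (by positivity), Real.logb_pow, Real.logb_pow]
    have hπ' : Real.logb p ‖π‖ = -(1 / ((p : ℝ) - 1)) := by linarith
    have hp' : Real.logb p ‖(p : K)‖ = -1 := by linarith
    rw [hπ', hp', hLdef]
    push_cast
    ring
  have hLstep : ∀ j : ℕ, L (j + 1) = L j + ((p : ℝ) ^ j - 1) := by
    intro j
    simp only [hLdef]
    field_simp
    push_cast
    ring
  have hppow : ∀ j : ℕ, (1 : ℝ) ≤ (p : ℝ) ^ j := fun j => one_le_pow₀ hp1.le
  have hLmono : ∀ a b : ℕ, a ≤ b → L a ≤ L b := by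
    intro a b hab
    induction b with
    | zero => simp_all
    | succ n ih =>
      rcases Nat.lt_or_ge a (n + 1) with h | h
      · have := ih (Nat.lt_succ_iff.mp h)
        have := hppow n
        rw [hLstep n]; linarith
      · have : a = n + 1 := le_antisymm hab h
        subst this; rfl
  intro i
  -- π * γ i is the partial sum
  have hπγ : π * γ i = ∑ j ∈ Finset.range (i + 1), f j := by
    rcases Nat.eq_zero_or_pos i with rfl | hi
    · simp [hγ0, hf]
    · rw [hγ i hi, ← mul_assoc, mul_inv_cancel₀ hπ0, one_mul]
  set g : ℕ → K := fun j => f (i + 1 + j) with hgdef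
  have hg : HasSum g (-(π * γ i)) := by
    have h1 : HasSum (fun n : ℕ => f (n + (i + 1)))
        (0 - ∑ j ∈ Finset.range (i + 1), f j) :=
      (hasSum_nat_add_iff' (i + 1)).mpr hzero
    have h2 : (fun n : ℕ => f (n + (i + 1))) = g := by
      funext n; simp [hgdef, add_comm]
    rw [h2, zero_sub, ← hπγ] at h1
    exact h1
  refine ⟨hg, ?_⟩
  -- norm computation
  have htsum : ∑' n, g n = g 0 + ∑' b, g (b + 1) := Summable.tsum_eq_zero_add hg.summable
  have hRle : ‖∑' b, g (b + 1)‖ ≤ ‖f (i + 2)‖ := by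
    apply IsUltrametricDist.norm_tsum_le_of_forall_le_of_nonneg (hfpos (i + 2)).le
    intro b
    have hLb : L (i + 2) ≤ L (i + 1 + (b + 1)) := hLmono _ _ (by omega)
    have e1 := hL (i + 2)
    have e2 := hL (i + 1 + (b + 1))
    have key : ‖f (i + 1 + (b + 1))‖ ≤ ‖f (i + 2)‖ :=
      (Real.logb_le_logb hp1 (hfpos _) (hfpos _)).mp (by linarith)
    exact key
  have hflt : ‖f (i + 2)‖ < ‖f (i + 1)‖ := by
    have h1 : L (i + 1) < L (i + 2) := by
      have := hLstep (i + 1)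
      have h2 : (1 : ℝ) < (p : ℝ) ^ (i + 1) := one_lt_pow₀ hp1 (by omega)
      linarith
    have := hL (i + 1)
    have := hL (i + 2)
    exact (Real.logb_lt_logb_iff hp1 (hfpos _) (hfpos _)).mp (by linarith)
  have hg0 : g 0 = f (i + 1) := by simp [hgdef]
  have hnorm : ‖π * γ i‖ = ‖f (i + 1)‖ := by
    have h1 : ‖π * γ i‖ = ‖∑' n, g n‖ := by rw [hg.tsum_eq, norm_neg]
    rw [h1, htsum, hg0]
    rcases eq_or_ne ‖∑' b, g (b + 1)‖ ‖f (i + 1)‖ with h | h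
    · exact absurd (h ▸ hRle.trans_lt hflt) (lt_irrefl _)
    · rw [IsUltrametricDist.norm_add_eq_max_of_norm_ne_norm (fun hc => h hc.symm),
        max_eq_left (hRle.trans hflt.le)]
  have hγnorm : ‖γ i‖ = ‖f (i + 1)‖ / ‖π‖ := by
    rw [← hnorm, norm_mul]
    field_simp
  rw [hγnorm, Real.logb_div (hfpos _).ne' hπpos.ne']
  have h1 := hL (i + 1)
  have hπ' : Real.logb p ‖π‖ = -(1 / ((p : ℝ) - 1)) := by linarith
  have h2 : Real.logb p ‖f (i + 1)‖ = -L (i + 1) := by linarith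
  rw [h2, hπ', hLdef]
  push_cast
  field_simp
  ring
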